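/- For every integer n ≥ 2, with α = 3·⌈log n⌉, the following inequality holds in the real numbers: Σ_{k=1}^{n} C(n, k) · C(n, k−1) · ((k−1)/n)^{kα} ≤ 2 · Σ_{k=1}^{⌈n/2⌉} (e/k)^{2k} · n^{−k + 3k(k−1)/n}, where n^x denotes the real power exp(x · log n). -/

import Mathlib

set_option maxHeartbeats 1000000


lemma pow_self_le_exp_mul_factorial (k : ℕ) : (k:ℝ)^k ≤ Real.exp 1 ^ k * k.factorial := by
  have h := Real.sum_le_exp_of_nonneg (x := (k:ℝ)) (by positivity) (k+1)
  have hterm : (k:ℝ)^k / k.factorial ≤ Real.exp k := by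
    refine le_trans ?_ h
    exact Finset.single_le_sum (f := fun i => (k:ℝ)^i / i.factorial)
      (fun i _ => by positivity) (Finset.self_mem_range_succ k)
  have hfac : (0:ℝ) < k.factorial := by positivity
  rw [div_le_iff₀ hfac] at hterm
  calc (k:ℝ)^k ≤ Real.exp k * k.factorial := hterm
    _ = Real.exp 1 ^ k * k.factorial := by rw [← Real.exp_nat_mul, mul_one]

lemma choose_le_exp_pow (n k : ℕ) (hk : 1 ≤ k) :
    (n.choose k : ℝ) ≤ (Real.exp 1 * n / k)^k := by
  have hkpos : (0:ℝ) < k := by exact_mod_cast hk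
  have h1 : (n.choose k : ℝ) * k.factorial ≤ (n:ℝ)^k := by
    have h := Nat.descFactorial_le_pow n k
    rw [Nat.descFactorial_eq_factorial_mul_choose] at h
    exact_mod_cast Nat.mul_comm (k.factorial) (n.choose k) ▸ h
  have h2 := pow_self_le_exp_mul_factorial k
  rw [div_pow, le_div_iff₀ (by positivity)]
  calc (n.choose k : ℝ) * (k:ℝ)^k
      ≤ (n.choose k : ℝ) * (Real.exp 1 ^ k * k.factorial) :=
        mul_le_mul_of_nonneg_left h2 (by positivity)
    _ = Real.exp 1 ^ k * ((n.choose k : ℝ) * k.factorial) := by ring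
    _ ≤ Real.exp 1 ^ k * (n:ℝ)^k := mul_le_mul_of_nonneg_left h1 (by positivity)
    _ = (Real.exp 1 * n)^k := by rw [mul_pow]

lemma choose_pred_le (n k : ℕ) (hk : 1 ≤ k) (h : 2*k ≤ n+1) :
    n.choose (k-1) ≤ n.choose k := by
  have hk' : k - 1 + 1 = k := Nat.succ_pred_eq_of_pos hk
  have hid := Nat.choose_succ_right_eq n (k-1)
  rw [hk'] at hid
  have hle : k ≤ n - (k-1) := by omega
  have hmul : n.choose (k-1) * k ≤ n.choose k * k := by
    rw [hid]; exact Nat.mul_le_mul_left _ hle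
  exact Nat.le_of_mul_le_mul_right hmul hk

lemma term_le (n j k : ℕ) (hn : 2 ≤ n) (hj1 : 1 ≤ j) (hjn : j ≤ n)
    (hk1 : 1 ≤ k) (hk2 : 2*k ≤ n+1)
    (hprod : j*(n+1-j) = k*(n+1-k))
    (hch : n.choose j * n.choose (j-1) = n.choose k * n.choose (k-1)) :
    (n.choose j : ℝ) * (n.choose (j-1) : ℝ) *
      (((j-1 : ℕ):ℝ)/(n:ℝ)) ^ (j * (3 * ⌈Real.log n⌉₊)) ≤
    (Real.exp 1 / (k:ℝ)) ^ (2*k) *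
      (n:ℝ) ^ (-(k:ℝ) + 3*(k:ℝ)*((k:ℝ)-1)/(n:ℝ)) := by
  set α : ℕ := 3 * ⌈Real.log n⌉₊ with hαdef
  have hN : (0:ℝ) < n := by positivity
  have hlog : 0 < Real.log n := Real.log_pos (by exact_mod_cast hn : (1:ℝ) < n)
  have hα : 3 * Real.log n ≤ (α:ℝ) := by
    have := Nat.le_ceil (Real.log n)
    push_cast [hαdef]
    nlinarith
  have hkR : (1:ℝ) ≤ k := by exact_mod_cast hk1
  have hkR2 : 2*(k:ℝ) ≤ (n:ℝ)+1 := by exact_mod_cast hk2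
  have hjR : (1:ℝ) ≤ j := by exact_mod_cast hj1
  have hjnR : (j:ℝ) ≤ n := by exact_mod_cast hjn
  -- choose bound
  have hcb : (n.choose j : ℝ) * (n.choose (j-1) : ℝ) ≤ (Real.exp 1 * n / k)^(2*k) := by
    have e1 : (n.choose j : ℝ) * (n.choose (j-1) : ℝ)
        = (n.choose k : ℝ) * (n.choose (k-1) : ℝ) := by exact_mod_cast congrArg (Nat.cast (R:=ℝ)) hch
    have e2 : (n.choose (k-1) : ℝ) ≤ (n.choose k : ℝ) := by
      exact_mod_cast choose_pred_le n k hk1 hk2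
    have e3 := choose_le_exp_pow n k hk1
    have hc0 : (0:ℝ) ≤ (n.choose (k-1) : ℝ) := by positivity
    calc (n.choose j : ℝ) * (n.choose (j-1) : ℝ)
        = (n.choose k : ℝ) * (n.choose (k-1) : ℝ) := e1
      _ ≤ (n.choose k : ℝ) * (n.choose k : ℝ) := by nlinarith
      _ ≤ (Real.exp 1 * n / k)^k * (Real.exp 1 * n / k)^k := by
          have h0 : (0:ℝ) ≤ (n.choose k : ℝ) := by positivity
          nlinarith
      _ = (Real.exp 1 * n / k)^(2*k) := by rw [← pow_add]; ring_nf
  -- power bound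
  have hj' : ((j-1 : ℕ):ℝ) = (j:ℝ)-1 := by
    push_cast [Nat.cast_sub hj1]; ring
  have hprodR : (j:ℝ)*((n:ℝ)+1-j) = (k:ℝ)*((n:ℝ)+1-k) := by
    have h := congrArg (Nat.cast (R:=ℝ)) hprod
    push_cast [Nat.cast_sub (show j ≤ n+1 by omega), Nat.cast_sub (show k ≤ n+1 by omega)] at h
    linarith
  have hbase0 : (0:ℝ) ≤ ((j-1 : ℕ):ℝ)/(n:ℝ) := by positivity
  have hbase : ((j-1 : ℕ):ℝ)/(n:ℝ) ≤ Real.exp (-(((n:ℝ)+1-(j:ℝ))/(n:ℝ))) := by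
    have h := Real.one_sub_le_exp_neg (((n:ℝ)+1-(j:ℝ))/(n:ℝ))
    rw [hj']
    have he : ((j:ℝ)-1)/(n:ℝ) = 1 - ((n:ℝ)+1-(j:ℝ))/(n:ℝ) := by field_simp; ring
    rw [he]; exact h
  have hpow : (((j-1 : ℕ):ℝ)/(n:ℝ)) ^ (j * α)
      ≤ Real.exp (-(3*Real.log n * ((k:ℝ)*((n:ℝ)+1-k))/(n:ℝ))) := by
    calc (((j-1 : ℕ):ℝ)/(n:ℝ)) ^ (j * α)
        ≤ (Real.exp (-(((n:ℝ)+1-(j:ℝ))/(n:ℝ)))) ^ (j * α) :=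
          pow_le_pow_left₀ hbase0 hbase _
      _ = Real.exp (-(((j:ℝ)*(α:ℝ)) * (((n:ℝ)+1-(j:ℝ))/(n:ℝ)))) := by
          rw [← Real.exp_nat_mul]; push_cast; ring_nf
      _ ≤ Real.exp (-(3*Real.log n * ((k:ℝ)*((n:ℝ)+1-k))/(n:ℝ))) := by
          apply Real.exp_le_exp.2
          rw [neg_le_neg_iff]
          have hkpos : (0:ℝ) < (k:ℝ)*((n:ℝ)+1-k) := by nlinarith
          have : (j:ℝ)*(α:ℝ) * (((n:ℝ)+1-(j:ℝ))/(n:ℝ))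
              = (α:ℝ) * ((k:ℝ)*((n:ℝ)+1-k)) / (n:ℝ) := by
            rw [eq_div_iff (ne_of_gt hN)]
            field_simp
            linear_combination (α:ℝ) * hprodR
          rw [this]
          exact (div_le_div_iff_of_pos_right hN).2 (by nlinarith)
  -- combine
  have hnonneg : (0:ℝ) ≤ (((j-1 : ℕ):ℝ)/(n:ℝ)) ^ (j * α) := pow_nonneg hbase0 _
  calc (n.choose j : ℝ) * (n.choose (j-1) : ℝ) * (((j-1 : ℕ):ℝ)/(n:ℝ)) ^ (j * α)
      ≤ (Real.exp 1 * n / k)^(2*k) *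
          Real.exp (-(3*Real.log n * ((k:ℝ)*((n:ℝ)+1-k))/(n:ℝ))) := by
        exact mul_le_mul hcb hpow hnonneg (pow_nonneg (by positivity) _)
    _ = (Real.exp 1 / (k:ℝ)) ^ (2*k) *
        (n:ℝ) ^ (-(k:ℝ) + 3*(k:ℝ)*((k:ℝ)-1)/(n:ℝ)) := by
        rw [Real.rpow_def_of_pos hN]
        rw [show Real.exp 1 * n / k = (Real.exp 1 / k) * n by ring, mul_pow]
        rw [show ((n:ℝ))^(2*k) = Real.exp (((2*k:ℕ):ℝ) * Real.log n) by
          rw [← Real.exp_log (pow_pos hN (2*k)), Real.log_pow]]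
        rw [mul_assoc, ← Real.exp_add]
        congr 1
        push_cast
        field_simp
        ring

noncomputable def gfun (n : ℕ) : ℕ → ℝ := fun k =>
  (Real.exp 1 / (k : ℝ)) ^ (2 * k) *
    (n : ℝ) ^ (-(k : ℝ) + 3 * (k : ℝ) * ((k : ℝ) - 1) / (n : ℝ))

theorem qn_le_rpow_sum (n : ℕ) (hn : 2 ≤ n) :
    ∑ k ∈ Finset.Icc 1 n, (n.choose k : ℝ) * (n.choose (k - 1) : ℝ) *
        (((k - 1 : ℕ) : ℝ) / (n : ℝ)) ^ (k * (3 * ⌈Real.log n⌉₊)) ≤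
      2 * ∑ k ∈ Finset.Icc 1 ((n + 1) / 2),
        (Real.exp 1 / (k : ℝ)) ^ (2 * k) *
          (n : ℝ) ^ (-(k : ℝ) + 3 * (k : ℝ) * ((k : ℝ) - 1) / (n : ℝ)) := by
  have hg0 : ∀ k : ℕ, 0 ≤ gfun n k := fun k =>
    mul_nonneg (pow_nonneg (by positivity) _) (Real.rpow_nonneg (by positivity) _)
  set m := (n+1)/2 with hm
  have hmn : m ≤ n := by omega
  have e0 : Finset.Icc 1 n = Finset.Ioc 0 n := by ext x; simp; omega
  have e1 : Finset.Icc 1 m = Finset.Ioc 0 m := by ext x; simp; omega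
  have key : ∀ j ∈ Finset.Icc 1 n,
      (n.choose j : ℝ) * (n.choose (j-1) : ℝ) *
        (((j-1 : ℕ):ℝ)/(n:ℝ)) ^ (j * (3 * ⌈Real.log n⌉₊)) ≤ gfun n (min j (n+1-j)) := by
    intro j hj
    rw [Finset.mem_Icc] at hj
    obtain ⟨hj1, hjn⟩ := hj
    set k := min j (n+1-j) with hk
    have hk1 : 1 ≤ k := by omega
    have hk2 : 2*k ≤ n+1 := by omega
    have hprod : j*(n+1-j) = k*(n+1-k) := by
      rcases le_total j (n+1-j) with h|h
      · rw [hk, min_eq_left h]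
      · rw [hk, min_eq_right h, show n+1-(n+1-j) = j by omega, Nat.mul_comm]
    have hch : n.choose j * n.choose (j-1) = n.choose k * n.choose (k-1) := by
      rcases le_total j (n+1-j) with h|h
      · rw [hk, min_eq_left h]
      · rw [hk, min_eq_right h, show n+1-j-1 = n-j by omega, Nat.choose_symm hjn,
          show n+1-j = n-(j-1) by omega, Nat.choose_symm (show j-1 ≤ n by omega)]
        exact Nat.mul_comm _ _
    exact term_le n j k hn hj1 hjn hk1 hk2 hprod hch
  have hre : ∑ j ∈ Finset.Ioc m n, gfun n (n+1-j) = ∑ k ∈ Finset.Ioc 0 (n-m), gfun n k := by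
    refine Finset.sum_nbij' (i := fun j => n+1-j) (j := fun k => n+1-k) ?_ ?_ ?_ ?_ ?_
    all_goals intro a ha
    all_goals first
      | rfl
      | (simp only [Finset.mem_Ioc] at *; omega)
  calc ∑ j ∈ Finset.Icc 1 n, (n.choose j : ℝ) * (n.choose (j - 1) : ℝ) *
        (((j - 1 : ℕ) : ℝ) / (n : ℝ)) ^ (j * (3 * ⌈Real.log n⌉₊))
      ≤ ∑ j ∈ Finset.Icc 1 n, gfun n (min j (n+1-j)) := Finset.sum_le_sum key
    _ = ∑ j ∈ Finset.Ioc 0 m, gfun n (min j (n+1-j))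
        + ∑ j ∈ Finset.Ioc m n, gfun n (min j (n+1-j)) := by
        rw [e0, ← Finset.sum_Ioc_consecutive _ (Nat.zero_le m) hmn]
    _ ≤ ∑ k ∈ Finset.Ioc 0 m, gfun n k + ∑ k ∈ Finset.Ioc 0 m, gfun n k := by
        apply add_le_add
        · apply le_of_eq
          refine Finset.sum_congr rfl fun j hj => ?_
          rw [Finset.mem_Ioc] at hj
          congr 1
          omega
        · have h2 : ∑ j ∈ Finset.Ioc m n, gfun n (min j (n+1-j))
              = ∑ j ∈ Finset.Ioc m n, gfun n (n+1-j) := by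
            refine Finset.sum_congr rfl fun j hj => ?_
            rw [Finset.mem_Ioc] at hj
            congr 1
            omega
          rw [h2, hre]
          refine Finset.sum_le_sum_of_subset_of_nonneg ?_ fun k _ _ => hg0 k
          intro x
          simp only [Finset.mem_Ioc]
          omega
    _ = 2 * ∑ k ∈ Finset.Ioc 0 m, gfun n k := (two_mul _).symm
    _ = 2 * ∑ k ∈ Finset.Icc 1 ((n+1)/2),
          (Real.exp 1 / (k : ℝ)) ^ (2 * k) *
            (n : ℝ) ^ (-(k : ℝ) + 3 * (k : ℝ) * ((k : ℝ) - 1) / (n : ℝ)) := by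
        rw [← hm, e1]
        rfl
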